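/- Let d ≥ 2 be an integer and let v : {0,1}^d → ℝ be any coalitional game. The Shapley regression loss h_v(φ) = E_{s∼p_Sh}[(v(s) − v(0) − s^⊤φ)²] is μ-strongly convex as a function of φ ∈ ℝ^d with strong-convexity constant μ = 1/H_{d−1}; that is, the function φ ↦ h_v(φ) − (1/(2·H_{d−1}))·‖φ‖₂² is convex on ℝ^d. -/

import Mathlib

open scoped BigOperators

/-- The `n`-th harmonic number `H_n = ∑_{k=1}^n 1/k`. -/
noncomputable def harm (n : ℕ) : ℝ := ∑ k ∈ Finset.Icc 1 n, (1 : ℝ) / k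

/-- Normalizing constant `Q = ∑_{k=1}^{d-1} (d-1)/(k(d-k))` of the Shapley kernel. -/
noncomputable def shapQ (d : ℕ) : ℝ :=
  ∑ k ∈ Finset.Icc 1 (d - 1), ((d : ℝ) - 1) / ((k : ℝ) * ((d : ℝ) - (k : ℝ)))

/-- Shapley kernel distribution on subsets `s ⊆ {1,…,d}`:
`p_Sh(s) = Q⁻¹ (d-1)/(C(d,k) k (d-k))` for `0 < k = |s| < d`, and `0` otherwise. -/
noncomputable def pSh (d : ℕ) (s : Finset (Fin d)) : ℝ :=
  if 0 < s.card ∧ s.card < d then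
    (((d : ℝ) - 1) /
      ((Nat.choose d s.card : ℝ) * (s.card : ℝ) * ((d : ℝ) - (s.card : ℝ)))) / shapQ d
  else 0

lemma harm_eq_range (n : ℕ) : harm n = ∑ k ∈ Finset.range n, (1:ℝ)/((k:ℝ)+1) := by
  rw [harm, ← Finset.Ico_add_one_right_eq_Icc, Finset.sum_Ico_eq_sum_range]
  simp [add_comm]

lemma one_le_harm {n : ℕ} (hn : 1 ≤ n) : 1 ≤ harm n := by
  have h := Finset.single_le_sum (f := fun k : ℕ => (1:ℝ)/k) (fun i _ => by positivity)
    (Finset.mem_Icc.mpr ⟨le_refl 1, hn⟩)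
  simpa [harm] using h

lemma harm_pos {n : ℕ} (hn : 1 ≤ n) : 0 < harm n := lt_of_lt_of_le one_pos (one_le_harm hn)

lemma harm_succ (n : ℕ) : harm (n+1) = harm n + 1/((n:ℝ)+1) := by
  rw [harm, harm, Finset.sum_Icc_succ_top (by omega)]
  push_cast; ring_nf

lemma sum_inv_reflect (n : ℕ) :
    ∑ k ∈ Finset.range n, (1:ℝ)/((n:ℝ) - (k:ℝ)) = harm n := by
  rw [harm_eq_range]
  rw [← Finset.sum_range_reflect (fun k => (1:ℝ)/((k:ℝ)+1)) n]
  refine Finset.sum_congr rfl fun k hk => ?_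
  have hk' : k < n := Finset.mem_range.mp hk
  have : ((n - 1 - k : ℕ) : ℝ) + 1 = (n:ℝ) - k := by
    have : (n - 1 - k) + (k + 1) = n := by omega
    have := congrArg (fun m : ℕ => (m:ℝ)) this
    push_cast at this
    linarith
  rw [this]

lemma sum_b_reflect (m : ℕ) :
    ∑ k ∈ Finset.range m, ((k:ℝ)+1)/((m:ℝ) - (k:ℝ)) = ((m:ℝ)+1) * harm m - m := by
  rw [← Finset.sum_range_reflect (fun k => ((k:ℝ)+1)/((m:ℝ) - (k:ℝ))) m]
  have : ∀ k ∈ Finset.range m, ((m - 1 - k : ℕ):ℝ)+1 = (m:ℝ) - k ∧ (m:ℝ) - ((m-1-k:ℕ):ℝ) = (k:ℝ)+1 := by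
    intro k hk
    have hk' : k < m := Finset.mem_range.mp hk
    have h1 : (m - 1 - k) + (k + 1) = m := by omega
    have := congrArg (fun j : ℕ => (j:ℝ)) h1
    push_cast at this
    constructor <;> linarith
  rw [Finset.sum_congr rfl (fun k hk => by rw [(this k hk).1, (this k hk).2])]
  have : ∀ k ∈ Finset.range m, ((m:ℝ) - k)/((k:ℝ)+1) = ((m:ℝ)+1) * (1/((k:ℝ)+1)) - 1 := by
    intro k hk
    have : ((k:ℝ)+1) ≠ 0 := by positivity
    field_simp
    ring
  rw [Finset.sum_congr rfl this, Finset.sum_sub_distrib, ← Finset.mul_sum, ← harm_eq_range]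
  simp

lemma sum_Icc_one (n : ℕ) (g : ℕ → ℝ) :
    ∑ k ∈ Finset.Icc 1 n, g k = ∑ k ∈ Finset.range n, g (k+1) := by
  rw [← Finset.Ico_add_one_right_eq_Icc, Finset.sum_Ico_eq_sum_range]
  simp [add_comm]

lemma sum_inv_reflect' {d : ℕ} (hd : 1 ≤ d) :
    ∑ k ∈ Finset.Icc 1 (d-1), (1:ℝ)/((d:ℝ) - (k:ℝ)) = harm (d-1) := by
  rw [sum_Icc_one, ← sum_inv_reflect (d-1)]
  refine Finset.sum_congr rfl fun k hk => ?_
  have : ((d-1:ℕ):ℝ) = (d:ℝ) - 1 := by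
    have : (d - 1) + 1 = d := by omega
    have := congrArg (fun j : ℕ => (j:ℝ)) this; push_cast at this; linarith
  rw [this]; push_cast; ring_nf

lemma shapQ_eq {d : ℕ} (hd : 2 ≤ d) :
    shapQ d = 2 * ((d:ℝ)-1) * harm (d-1) / (d:ℝ) := by
  have hd0 : (0:ℝ) < d := by positivity
  have key : ∀ k ∈ Finset.Icc 1 (d-1),
      ((d : ℝ) - 1) / ((k : ℝ) * ((d : ℝ) - (k : ℝ)))
        = ((d:ℝ)-1)/d * (1/(k:ℝ)) + ((d:ℝ)-1)/d * (1/((d:ℝ)-(k:ℝ))) := by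
    intro k hk
    obtain ⟨h1, h2⟩ := Finset.mem_Icc.mp hk
    have hk0 : (0:ℝ) < k := by exact_mod_cast h1
    have hdk : (0:ℝ) < (d:ℝ) - k := by
      have : k < d := by omega
      have : (k:ℝ) < d := by exact_mod_cast this
      linarith
    field_simp
    ring
  rw [shapQ, Finset.sum_congr rfl key, Finset.sum_add_distrib, ← Finset.mul_sum, ← Finset.mul_sum,
    sum_inv_reflect' (by omega)]
  have : ∑ k ∈ Finset.Icc 1 (d-1), (1:ℝ)/(k:ℝ) = harm (d-1) := rfl
  rw [this]; ring

lemma shapQ_pos {d : ℕ} (hd : 2 ≤ d) : 0 < shapQ d := by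
  rw [shapQ_eq hd]
  have h1 : (0:ℝ) < (d:ℝ) - 1 := by
    have : (2:ℝ) ≤ d := by exact_mod_cast hd
    linarith
  have h2 := harm_pos (n := d-1) (by omega)
  have h3 : (0:ℝ) < d := by positivity
  positivity

/-- Shapley regression loss `h_v(φ) = E_{s∼p_Sh}[(v(s) - v(0) - sᵀφ)²]`. -/
noncomputable def hLoss (d : ℕ) (v : Finset (Fin d) → ℝ)
    (φ : EuclideanSpace ℝ (Fin d)) : ℝ :=
  ∑ s : Finset (Fin d), pSh d s * (v s - v ∅ - ∑ i ∈ s, φ i) ^ 2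

noncomputable def wfun (d k : ℕ) : ℝ :=
  if 0 < k ∧ k < d then
    (((d : ℝ) - 1) / ((Nat.choose d k : ℝ) * (k : ℝ) * ((d : ℝ) - (k : ℝ)))) / shapQ d
  else 0

lemma pSh_eq (d : ℕ) (s : Finset (Fin d)) : pSh d s = wfun d s.card := rfl


/-- sum over powerset of a function of card -/
lemma sum_powerset_card {α : Type*} [DecidableEq α] (s : Finset α) (g : ℕ → ℝ) :
    ∑ t ∈ s.powerset, g t.card = ∑ k ∈ Finset.range (s.card+1), (s.card.choose k : ℝ) * g k := by
  rw [Finset.sum_powerset_apply_card]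
  simp [nsmul_eq_mul]

lemma diag_sum {d : ℕ} (hd : 2 ≤ d) (i : Fin d) :
    ∑ s ∈ Finset.univ.filter (fun s : Finset (Fin d) => i ∈ s), pSh d s = 1/2 := by
  have hQ := shapQ_pos hd
  have hH := harm_pos (n := d-1) (by omega)
  -- bijection with powerset of univ.erase i
  have step1 : ∑ s ∈ Finset.univ.filter (fun s : Finset (Fin d) => i ∈ s), pSh d s
      = ∑ t ∈ ((Finset.univ : Finset (Fin d)).erase i).powerset, wfun d (t.card + 1) := by
    refine Finset.sum_nbij' (fun s => s.erase i) (fun t => insert i t) ?_ ?_ ?_ ?_ ?_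
    · intro s hs
      simp only [Finset.mem_filter] at hs
      exact Finset.mem_powerset.mpr (Finset.erase_subset_erase i (Finset.subset_univ s))
    · intro t ht
      simp only [Finset.mem_filter]
      exact ⟨Finset.mem_univ _, Finset.mem_insert_self i t⟩
    · intro s hs
      simp only [Finset.mem_filter] at hs
      exact Finset.insert_erase hs.2
    · intro t ht
      have := Finset.mem_powerset.mp ht
      have hi : i ∉ t := fun h => (Finset.mem_erase.mp (this h)).1 rfl
      exact Finset.erase_insert hi
    · intro s hs
      simp only [Finset.mem_filter] at hs
      rw [pSh_eq, Finset.card_erase_of_mem hs.2]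
      congr 1
      have : 1 ≤ s.card := Finset.card_pos.mpr ⟨i, hs.2⟩
      omega
  rw [step1, sum_powerset_card _ (fun m => wfun d (m+1))]
  have hcard : ((Finset.univ : Finset (Fin d)).erase i).card = d - 1 := by
    rw [Finset.card_erase_of_mem (Finset.mem_univ i), Finset.card_univ, Fintype.card_fin]
  rw [hcard]
  have hd1 : d - 1 + 1 = d := by omega
  rw [hd1]
  -- split off top term k = d-1 where wfun d d = 0
  have hd' : d = (d-1) + 1 := by omega
  rw [hd', Finset.sum_range_succ, ← hd']
  have htop : wfun d d = 0 := by
    rw [wfun, if_neg]; omega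
  rw [htop, mul_zero, add_zero]
  -- termwise
  have hterm : ∀ k ∈ Finset.range (d-1),
      ((d-1).choose k : ℝ) * wfun d (k+1)
        = ((d:ℝ)-1)/((d:ℝ) * shapQ d) * (1/(((d-1:ℕ):ℝ) - (k:ℝ))) := by
    intro k hk
    have hk' : k < d - 1 := Finset.mem_range.mp hk
    have hcond : 0 < k + 1 ∧ k + 1 < d := ⟨by omega, by omega⟩
    rw [wfun, if_pos hcond]
    have hkey : (d:ℝ) * ((d-1).choose k : ℝ) = (d.choose (k+1) : ℝ) * ((k:ℝ)+1) := by
      have := Nat.add_one_mul_choose_eq (d-1) k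
      have h2 : (d-1) + 1 = d := by omega
      rw [h2] at this
      exact_mod_cast congrArg (fun j : ℕ => (j:ℝ)) this
    have hA : (0:ℝ) < (d.choose (k+1) : ℝ) := by
      exact_mod_cast Nat.choose_pos (by omega : k + 1 ≤ d)
    have hX : ((d-1:ℕ):ℝ) = (d:ℝ) - 1 := by
      have : (d-1) + 1 = d := by omega
      have := congrArg (fun j : ℕ => (j:ℝ)) this; push_cast at this; linarith
    have hXpos : (0:ℝ) < (d:ℝ) - 1 - k := by
      have : ((k:ℕ):ℝ) < ((d-1:ℕ):ℝ) := by exact_mod_cast hk'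
      rw [hX] at this; linarith
    have hd0 : (0:ℝ) < (d:ℝ) := by positivity
    have hk1 : (0:ℝ) < (k:ℝ) + 1 := by positivity
    rw [hX]
    have hne1 : ((d:ℝ)) - ((k:ℝ)+1) ≠ 0 := by
      intro h; nlinarith
    have hQne : shapQ d ≠ 0 := ne_of_gt hQ
    push_cast
    field_simp
    linear_combination ((d:ℝ)-1)*((d:ℝ)-1-(k:ℝ))*hkey
  rw [Finset.sum_congr rfl hterm, ← Finset.mul_sum, sum_inv_reflect (d-1)]
  rw [shapQ_eq hd]
  have h1 : (0:ℝ) < (d:ℝ) - 1 := by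
    have : (2:ℝ) ≤ d := by exact_mod_cast hd
    linarith
  have hd0 : (0:ℝ) < (d:ℝ) := by positivity
  field_simp

lemma pair_sum {d : ℕ} (hd : 2 ≤ d) (i j : Fin d) (hij : i ≠ j) :
    ∑ s ∈ Finset.univ.filter (fun s : Finset (Fin d) => i ∈ s ∧ j ∈ s), pSh d s
      = (harm (d-1) - 1)/(2 * harm (d-1)) := by
  have hQ := shapQ_pos hd
  have hH := harm_pos (n := d-1) (by omega)
  have step1 : ∑ s ∈ Finset.univ.filter (fun s : Finset (Fin d) => i ∈ s ∧ j ∈ s), pSh d s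
      = ∑ t ∈ (((Finset.univ : Finset (Fin d)).erase i).erase j).powerset, wfun d (t.card + 2) := by
    refine Finset.sum_nbij' (fun s => (s.erase i).erase j) (fun t => insert i (insert j t)) ?_ ?_ ?_ ?_ ?_
    · intro s hs
      simp only [Finset.mem_filter] at hs
      refine Finset.mem_powerset.mpr ?_
      intro x hx
      simp only [Finset.mem_erase] at hx ⊢
      exact ⟨hx.1, hx.2.1, Finset.mem_univ x⟩
    · intro t ht
      simp only [Finset.mem_filter]
      exact ⟨Finset.mem_univ _, Finset.mem_insert_self i _,
        Finset.mem_insert_of_mem (Finset.mem_insert_self j t)⟩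
    · intro s hs
      simp only [Finset.mem_filter] at hs
      show insert i (insert j ((s.erase i).erase j)) = s
      rw [Finset.insert_erase (Finset.mem_erase.mpr ⟨hij.symm, hs.2.2⟩),
        Finset.insert_erase hs.2.1]
    · intro t ht
      have hsub := Finset.mem_powerset.mp ht
      have hi : i ∉ t := fun h => by
        have := hsub h
        exact (Finset.mem_erase.mp (Finset.mem_of_mem_erase this)).1 rfl
      have hj : j ∉ t := fun h => (Finset.mem_erase.mp (hsub h)).1 rfl
      show ((insert i (insert j t)).erase i).erase j = t
      rw [Finset.erase_insert (by
        simp only [Finset.mem_insert]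
        push_neg
        exact ⟨hij, hi⟩), Finset.erase_insert hj]
    · intro s hs
      simp only [Finset.mem_filter] at hs
      rw [pSh_eq]
      congr 1
      have hjs : j ∈ s.erase i := Finset.mem_erase.mpr ⟨hij.symm, hs.2.2⟩
      rw [Finset.card_erase_of_mem hjs, Finset.card_erase_of_mem hs.2.1]
      have h2 : 2 ≤ s.card := by
        have := Finset.card_le_card (Finset.insert_subset hs.2.1 (Finset.singleton_subset_iff.mpr hs.2.2))
        exact
          (Finset.one_lt_card.mpr ⟨i, hs.2.1, j, hs.2.2, hij⟩)
      omega
  rw [step1]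
  have hcard : (((Finset.univ : Finset (Fin d)).erase i).erase j).card = d - 2 := by
    have hji : j ∈ (Finset.univ : Finset (Fin d)).erase i :=
      Finset.mem_erase.mpr ⟨hij.symm, Finset.mem_univ _⟩
    rw [Finset.card_erase_of_mem hji, Finset.card_erase_of_mem (Finset.mem_univ i),
      Finset.card_univ, Fintype.card_fin]
    omega
  rw [sum_powerset_card _ (fun m => wfun d (m+2)), hcard]
  have hd2 : d - 2 + 1 = d - 1 := by omega
  rw [hd2]
  have hd' : d - 1 = (d-2) + 1 := by omega
  rw [hd', Finset.sum_range_succ, ← hd']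
  have htop : wfun d ((d-2) + 2) = 0 := by
    rw [wfun, if_neg]; omega
  rw [htop, mul_zero, add_zero]
  have hterm : ∀ k ∈ Finset.range (d-2),
      ((d-2).choose k : ℝ) * wfun d (k+2)
        = (1:ℝ)/((d:ℝ) * shapQ d) * (((k:ℝ)+1)/(((d-2:ℕ):ℝ) - (k:ℝ))) := by
    intro k hk
    have hk' : k < d - 2 := Finset.mem_range.mp hk
    have hcond : 0 < k + 2 ∧ k + 2 < d := ⟨by omega, by omega⟩
    rw [wfun, if_pos hcond]
    -- d*(d-1)*C(d-2,k) = C(d,k+2)*(k+2)*(k+1)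
    have hkey1 : (d:ℝ) * ((d-1).choose (k+1) : ℝ) = (d.choose (k+2) : ℝ) * ((k:ℝ)+2) := by
      have := Nat.add_one_mul_choose_eq (d-1) (k+1)
      have h2 : (d-1) + 1 = d := by omega
      rw [h2] at this
      have := congrArg (fun j : ℕ => (j:ℝ)) this
      push_cast at this
      push_cast
      linarith
    have hkey2 : ((d:ℝ)-1) * ((d-2).choose k : ℝ) = ((d-1).choose (k+1) : ℝ) * ((k:ℝ)+1) := by
      have := Nat.add_one_mul_choose_eq (d-2) k
      have h2 : (d-2) + 1 = d - 1 := by omega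
      rw [h2] at this
      have := congrArg (fun j : ℕ => (j:ℝ)) this
      push_cast at this
      have hc : ((d-2:ℕ):ℝ) = (d:ℝ) - 2 := by
        have h3 : (d-2) + 2 = d := by omega
        have := congrArg (fun j : ℕ => (j:ℝ)) h3; push_cast at this; linarith
      have hc1 : ((d-1:ℕ):ℝ) = (d:ℝ) - 1 := by
        have h3 : (d-1) + 1 = d := by omega
        have := congrArg (fun j : ℕ => (j:ℝ)) h3; push_cast at this; linarith
      rw [hc1] at this
      linarith
    have hA : (0:ℝ) < (d.choose (k+2) : ℝ) := by
      exact_mod_cast Nat.choose_pos (by omega : k + 2 ≤ d)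
    have hX : ((d-2:ℕ):ℝ) = (d:ℝ) - 2 := by
      have h3 : (d-2) + 2 = d := by omega
      have := congrArg (fun j : ℕ => (j:ℝ)) h3; push_cast at this; linarith
    have hXpos : (0:ℝ) < (d:ℝ) - 2 - k := by
      have : ((k:ℕ):ℝ) < ((d-2:ℕ):ℝ) := by exact_mod_cast hk'
      rw [hX] at this; linarith
    have hd0 : (0:ℝ) < (d:ℝ) := by positivity
    have hd1 : (0:ℝ) < (d:ℝ) - 1 := by linarith
    have hne1 : (d:ℝ) - ((k:ℝ)+2) ≠ 0 := by intro h; nlinarith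
    have hQne : shapQ d ≠ 0 := ne_of_gt hQ
    rw [hX]
    push_cast
    field_simp
    linear_combination ((d:ℝ))*((d:ℝ)-2-(k:ℝ))*hkey2
      + ((k:ℝ)+1)*((d:ℝ)-2-(k:ℝ))*hkey1
  rw [Finset.sum_congr rfl hterm, ← Finset.mul_sum]
  have hX : ((d-2:ℕ):ℝ) = (d:ℝ) - 2 := by
    have h3 : (d-2) + 2 = d := by omega
    have := congrArg (fun j : ℕ => (j:ℝ)) h3; push_cast at this; linarith
  have hrefl := sum_b_reflect (d-2)
  rw [hrefl]
  -- harm (d-1) = harm (d-2) + 1/(d-1)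
  have hharm : harm (d-1) = harm (d-2) + 1/(((d-2:ℕ):ℝ)+1) := by
    have h3 : d - 1 = (d-2) + 1 := by omega
    rw [h3, harm_succ]
  rw [shapQ_eq hd]
  have hd1 : (0:ℝ) < (d:ℝ) - 1 := by
    have : (2:ℝ) ≤ d := by exact_mod_cast hd
    linarith
  have hd0 : (0:ℝ) < (d:ℝ) := by positivity
  have hXr : ((d-2:ℕ):ℝ) = (d:ℝ) - 2 := hX
  rw [hXr] at hharm ⊢
  have hHne : harm (d-1) ≠ 0 := ne_of_gt hH
  have h21 : (d:ℝ) - 2 + 1 = (d:ℝ) - 1 := by ring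
  rw [h21] at hharm
  have h4 : harm (d-2) = harm (d-1) - 1/((d:ℝ)-1) := by linarith
  rw [h4]
  field_simp
  ring

/-- the quadratic form identity -/
lemma key_quad {d : ℕ} (hd : 2 ≤ d) (z : Fin d → ℝ) :
    ∑ s : Finset (Fin d), pSh d s * (∑ i ∈ s, z i)^2
      = (1/(2*harm (d-1))) * (∑ i, (z i)^2)
        + ((harm (d-1) - 1)/(2*harm (d-1))) * (∑ i, z i)^2 := by
  have hH := harm_pos (n := d-1) (by omega)
  set H := harm (d-1) with hHdef
  set b : ℝ := (H - 1)/(2*H) with hb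
  have hsum : ∀ s : Finset (Fin d), (∑ i ∈ s, z i) = ∑ i : Fin d, (if i ∈ s then z i else 0) := by
    intro s
    rw [Finset.sum_ite_mem, Finset.univ_inter]
  have expand : ∀ s : Finset (Fin d),
      (∑ i ∈ s, z i)^2 = ∑ i : Fin d, ∑ j : Fin d,
        (if i ∈ s ∧ j ∈ s then z i * z j else 0) := by
    intro s
    rw [hsum, sq, Finset.sum_mul_sum]
    refine Finset.sum_congr rfl fun i _ => Finset.sum_congr rfl fun j _ => ?_
    by_cases hi : i ∈ s <;> by_cases hj : j ∈ s <;> simp [hi, hj]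
  have h1 : ∑ i : Fin d, ∑ j : Fin d, z i * z j = (∑ i, z i)^2 := by
    rw [sq, Finset.sum_mul_sum]
  calc ∑ s : Finset (Fin d), pSh d s * (∑ i ∈ s, z i)^2
      = ∑ i : Fin d, ∑ j : Fin d, (z i * z j) *
          ∑ s ∈ Finset.univ.filter (fun s : Finset (Fin d) => i ∈ s ∧ j ∈ s), pSh d s := by
        simp_rw [expand, Finset.mul_sum]
        rw [Finset.sum_comm]
        refine Finset.sum_congr rfl fun i _ => ?_
        rw [Finset.sum_comm]
        refine Finset.sum_congr rfl fun j _ => ?_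
        rw [Finset.sum_filter]
        refine Finset.sum_congr rfl fun s _ => ?_
        by_cases h : i ∈ s ∧ j ∈ s <;> simp [h] <;> ring
    _ = ∑ i : Fin d, ∑ j : Fin d, (z i * z j) * (b + if i = j then 1/(2*H) else 0) := by
        refine Finset.sum_congr rfl fun i _ => Finset.sum_congr rfl fun j _ => ?_
        by_cases hij : i = j
        · subst hij
          rw [if_pos rfl]
          have hset : Finset.univ.filter (fun s : Finset (Fin d) => i ∈ s ∧ i ∈ s)
              = Finset.univ.filter (fun s : Finset (Fin d) => i ∈ s) := by
            simp
          rw [hset, diag_sum hd i]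
          congr 1
          rw [hb]
          field_simp
          ring
        · rw [if_neg hij, pair_sum hd i j hij, add_zero, hb]
    _ = b * ((∑ i, z i)^2) + (1/(2*H)) * (∑ i, (z i)^2) := by
        have split : ∀ i j : Fin d, (z i * z j) * (b + if i = j then 1/(2*H) else 0)
            = b * (z i * z j) + (if i = j then (1/(2*H)) * (z i)^2 else 0) := by
          intro i j
          by_cases h : i = j
          · subst h; simp [sq]; ring
          · simp [h]; ring
        simp_rw [split, Finset.sum_add_distrib, Finset.sum_ite_eq, Finset.mem_univ, if_pos,
          ← Finset.mul_sum]
        rw [← Finset.sum_mul]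
        ring
    _ = _ := by ring

lemma norm_sq_eq {d : ℕ} (x : EuclideanSpace ℝ (Fin d)) : ‖x‖^2 = ∑ i, (x i)^2 := by
  rw [EuclideanSpace.norm_eq, Real.sq_sqrt (by positivity)]
  refine Finset.sum_congr rfl fun i _ => ?_
  rw [Real.norm_eq_abs, sq_abs]


/-- The Shapley regression loss is `μ`-strongly convex with `μ = 1/H_{d-1}`:
`φ ↦ h_v(φ) - (1/(2 H_{d-1})) ‖φ‖²` is convex on `ℝ^d`. -/
theorem shapley_loss_strongly_convex (d : ℕ) (hd : 2 ≤ d) (v : Finset (Fin d) → ℝ) :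
    ConvexOn ℝ Set.univ
      (fun φ : EuclideanSpace ℝ (Fin d) =>
        hLoss d v φ - (1 / (2 * harm (d - 1))) * ‖φ‖ ^ 2) := by
  have hH := harm_pos (n := d-1) (by omega)
  have hH1 := one_le_harm (n := d-1) (by omega)
  refine ⟨convex_univ, ?_⟩
  intro x _ y _ a b ha hb hab
  simp only [smul_eq_mul]
  set z : Fin d → ℝ := fun i => y i - x i with hz
  -- pointwise application of the combination
  have happ : ∀ i : Fin d, (a • x + b • y) i = a * x i + b * y i := by
    intro i
    simp [PiLp.add_apply, PiLp.smul_apply, smul_eq_mul]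
  -- hLoss identity
  have hL : hLoss d v (a • x + b • y)
      = a * hLoss d v x + b * hLoss d v y
        - a * b * ∑ s : Finset (Fin d), pSh d s * (∑ i ∈ s, z i)^2 := by
    have term : ∀ s : Finset (Fin d),
        pSh d s * (v s - v ∅ - ∑ i ∈ s, (a • x + b • y) i)^2
          = a * (pSh d s * (v s - v ∅ - ∑ i ∈ s, x i)^2)
            + b * (pSh d s * (v s - v ∅ - ∑ i ∈ s, y i)^2)
            - a * b * (pSh d s * (∑ i ∈ s, z i)^2) := by
      intro s
      have hsum : ∑ i ∈ s, (a • x + b • y) i = a * ∑ i ∈ s, x i + b * ∑ i ∈ s, y i := by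
        rw [Finset.sum_congr rfl (fun i _ => happ i), Finset.sum_add_distrib,
          Finset.mul_sum, Finset.mul_sum]
      have hzsum : ∑ i ∈ s, z i = ∑ i ∈ s, y i - ∑ i ∈ s, x i := by
        rw [hz, Finset.sum_sub_distrib]
      rw [hsum, hzsum]
      have hb2 : b = 1 - a := by linarith
      rw [hb2]; ring
    simp only [hLoss]
    rw [Finset.sum_congr rfl (fun s _ => term s), Finset.sum_sub_distrib,
      Finset.sum_add_distrib, ← Finset.mul_sum, ← Finset.mul_sum, ← Finset.mul_sum]
  -- norm identity
  have hN : ∑ i, ((a • x + b • y) i)^2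
      = a * ∑ i, (x i)^2 + b * ∑ i, (y i)^2 - a * b * ∑ i, (z i)^2 := by
    have term : ∀ i : Fin d, ((a • x + b • y) i)^2
        = a * (x i)^2 + b * (y i)^2 - a * b * (z i)^2 := by
      intro i
      rw [happ i, hz]
      have hb2 : b = 1 - a := by linarith
      rw [hb2]; ring
    rw [Finset.sum_congr rfl (fun i _ => term i), Finset.sum_sub_distrib,
      Finset.sum_add_distrib, ← Finset.mul_sum, ← Finset.mul_sum, ← Finset.mul_sum]
  have hkey := key_quad hd z
  have hb0 : 0 ≤ (harm (d-1) - 1)/(2 * harm (d-1)) := by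
    apply div_nonneg <;> linarith
  have hpos : (1/(2*harm (d-1))) * (∑ i, (z i)^2)
      ≤ ∑ s : Finset (Fin d), pSh d s * (∑ i ∈ s, z i)^2 := by
    rw [hkey]
    nlinarith [sq_nonneg (∑ i, z i)]
  rw [norm_sq_eq, norm_sq_eq, norm_sq_eq, hL, hN]
  nlinarith [mul_nonneg ha hb, hpos, mul_pos (mul_pos two_pos hH) (mul_pos two_pos hH)]
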